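/- For the family φ_t of generalized Choi maps (with a(t) = (1−t)²/(1−t+t²), b(t) = t²/(1−t+t²), c(t) = 1/(1−t+t²)) and t > 0, one has φ_t = U(3π/2) ∘ φ_{1/t} ∘ U(π/2), where U(θ) denotes conjugation by the rotation matrix [[cos θ, 0, sin θ],[0,1,0],[−sin θ, 0, cos θ]]. -/
import Mathlib


open Matrix

noncomputable def aCoeff (t : ℝ) : ℝ := (1 - t) ^ 2 / (1 - t + t ^ 2)
noncomputable def bCoeff (t : ℝ) : ℝ := t ^ 2 / (1 - t + t ^ 2)
noncomputable def cCoeff (t : ℝ) : ℝ := 1 / (1 - t + t ^ 2)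

/-- The generalized Choi map with coefficients `a b c` on `M₃(ℂ)`. -/
noncomputable def gchoi (a b c : ℝ) (x : Matrix (Fin 3) (Fin 3) ℂ) :
    Matrix (Fin 3) (Fin 3) ℂ :=
  (1 / 2 : ℂ) •
    !![(a : ℂ) * x 0 0 + (b : ℂ) * x 1 1 + (c : ℂ) * x 2 2, -x 0 1, -x 0 2;
       -x 1 0, (a : ℂ) * x 1 1 + (b : ℂ) * x 2 2 + (c : ℂ) * x 0 0, -x 1 2;
       -x 2 0, -x 2 1, (a : ℂ) * x 2 2 + (b : ℂ) * x 0 0 + (c : ℂ) * x 1 1]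

/-- The generalized Choi map `φ_t`. -/
noncomputable def gchoiT (t : ℝ) : Matrix (Fin 3) (Fin 3) ℂ → Matrix (Fin 3) (Fin 3) ℂ :=
  gchoi (aCoeff t) (bCoeff t) (cCoeff t)

/-- The rotation matrix `U(θ)`. -/
noncomputable def rotU (θ : ℝ) : Matrix (Fin 3) (Fin 3) ℂ :=
  !![(Real.cos θ : ℂ), 0, (Real.sin θ : ℂ);
     0, 1, 0;
     (-Real.sin θ : ℂ), 0, (Real.cos θ : ℂ)]

lemma denom_pos (t : ℝ) : 0 < 1 - t + t ^ 2 := by nlinarith [sq_nonneg (t - 1), sq_nonneg t]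

lemma denom_ne (t : ℝ) : 1 - t + t ^ 2 ≠ 0 := (denom_pos t).ne'

lemma aCoeff_inv (t : ℝ) (ht : 0 < t) : aCoeff t⁻¹ = aCoeff t := by
  unfold aCoeff
  rw [div_eq_div_iff (denom_ne _) (denom_ne _)]
  field_simp
  ring

lemma bCoeff_inv (t : ℝ) (ht : 0 < t) : bCoeff t⁻¹ = cCoeff t := by
  unfold bCoeff cCoeff
  rw [div_eq_div_iff (denom_ne _) (denom_ne _)]
  field_simp
  ring

lemma cCoeff_inv (t : ℝ) (ht : 0 < t) : cCoeff t⁻¹ = bCoeff t := by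
  unfold cCoeff bCoeff
  rw [div_eq_div_iff (denom_ne _) (denom_ne _)]
  field_simp
  ring

lemma cos_3pi2 : Real.cos (3 * Real.pi / 2) = 0 := by
  have : (3 : ℝ) * Real.pi / 2 = Real.pi + Real.pi / 2 := by ring
  rw [this]
  simp [Real.cos_add]

lemma sin_3pi2 : Real.sin (3 * Real.pi / 2) = -1 := by
  have : (3 : ℝ) * Real.pi / 2 = Real.pi + Real.pi / 2 := by ring
  rw [this]
  simp [Real.sin_add]

lemma rotU_pi_div_two : rotU (Real.pi / 2) = !![0, 0, 1; 0, 1, 0; -1, 0, 0] := by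
  simp [rotU, Real.cos_pi_div_two, Real.sin_pi_div_two]

lemma rotU_3pi_div_two : rotU (3 * Real.pi / 2) = !![0, 0, -1; 0, 1, 0; 1, 0, 0] := by
  simp [rotU, cos_3pi2, sin_3pi2]

set_option maxHeartbeats 1000000 in
/-- `φ_t = U(3π/2) ∘ φ_{1/t} ∘ U(π/2)` for `t > 0`. -/
theorem gchoiT_unitary_relation (t : ℝ) (ht : 0 < t) :
    ∀ X : Matrix (Fin 3) (Fin 3) ℂ,
      gchoiT t X =
        rotU (3 * Real.pi / 2) *
          gchoiT (1 / t) (rotU (Real.pi / 2) * X * (rotU (Real.pi / 2))ᴴ) *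
            (rotU (3 * Real.pi / 2))ᴴ := by
  intro X
  rw [rotU_pi_div_two, rotU_3pi_div_two]
  ext i j
  fin_cases i <;> fin_cases j <;>
    simp [gchoiT, gchoi, mul_apply, vecMul, dotProduct, Fin.sum_univ_three,
      conjTranspose_apply, aCoeff_inv t ht, bCoeff_inv t ht, cCoeff_inv t ht] <;>
    ring
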